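/- The Petersen graph G satisfies mz(G) = mr^cr_ℤ(G) = 5, and this common value equals mr(G), mr_ℤ(G), γ(G) = γ_ℝ(G), and γ_ℤ(G). -/

import Mathlib

open scoped Classical

variable {V : Type*}

/-- The generalized Laplacian matrix `L(G, X_G)` of a simple graph `G`, with entries in the
polynomial ring `R[X_G]`: the `(u,v)` entry is the indeterminate `x_u` if `u = v`,
`-1` if `u` and `v` are adjacent, and `0` otherwise. -/
noncomputable def genLaplacian (R : Type*) [CommRing R] (G : SimpleGraph V) :
    Matrix V V (MvPolynomial V R) := fun u v =>
  if u = v then MvPolynomial.X u else if G.Adj u v then -1 else 0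

/-- The ideal generated by the determinants of all `i × i` submatrices of a square matrix. -/
noncomputable def minorsIdeal {S : Type*} [CommRing S] (M : Matrix V V S) (i : ℕ) : Ideal S :=
  Ideal.span { d : S | ∃ f g : Fin i → V, Function.Injective f ∧ Function.Injective g ∧
    d = (M.submatrix f g).det }

/-- The `i`-th critical ideal `I_i(G, X_G) ⊆ R[X_G]` of a simple graph `G`. -/
noncomputable def criticalIdeal (R : Type*) [CommRing R] (G : SimpleGraph V) (i : ℕ) :
    Ideal (MvPolynomial V R) :=
  minorsIdeal (genLaplacian R G) i

/-- The algebraic co-rank `γ_R(G)`: the largest `i` (with `0 ≤ i ≤ |V(G)|`) such that the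
`i`-th critical ideal of `G` over `R` is trivial (i.e. the whole ring). -/
noncomputable def algCoRank (R : Type*) [CommRing R] [Fintype V] (G : SimpleGraph V) : ℕ :=
  sSup {i | i ≤ Fintype.card V ∧ criticalIdeal R G i = ⊤}

/-- The rank of a square matrix over a commutative ring: the largest `k` such that some
`k × k` minor is nonzero and is not a zero divisor. -/
noncomputable def ringRank {R : Type*} [CommRing R] (M : Matrix V V R) : ℕ :=
  sSup {k | ∃ f g : Fin k → V, Function.Injective f ∧ Function.Injective g ∧
    (M.submatrix f g).det ≠ 0 ∧ (M.submatrix f g).det ∈ nonZeroDivisors R}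

/-- `A ∈ S_R(G)`: `A` is a symmetric matrix over `R`, indexed by the vertices of `G`, whose
off-diagonal `(u,v)` entry is nonzero iff `u` and `v` are adjacent (the diagonal is free). -/
def IsGraphMatrix {R : Type*} [CommRing R] (G : SimpleGraph V) (A : Matrix V V R) : Prop :=
  A.IsSymm ∧ ∀ u v : V, u ≠ v → (A u v ≠ 0 ↔ G.Adj u v)

/-- The minimum rank `mr_R(G)`: the smallest rank among matrices in `S_R(G)`. -/
noncomputable def minRank (R : Type*) [CommRing R] (G : SimpleGraph V) : ℕ :=
  sInf {k | ∃ A : Matrix V V R, IsGraphMatrix G A ∧ ringRank A = k}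

/-- The generalized Laplacian of `G` evaluated at a vector `d`: `L(G, d)` has `d u` on the
diagonal, `-1` at adjacent off-diagonal pairs and `0` elsewhere. -/
noncomputable def evalLaplacian {R : Type*} [CommRing R] (G : SimpleGraph V) (d : V → R) :
    Matrix V V R := fun u v =>
  if u = v then d u else if G.Adj u v then -1 else 0

/-- The critical minimum rank `mr^cr_R(G)`: the minimum of `rank (L(G,d))` over `d ∈ R^{V(G)}`. -/
noncomputable def crMinRank (R : Type*) [CommRing R] (G : SimpleGraph V) : ℕ :=
  sInf {k | ∃ d : V → R, ringRank (evalLaplacian G d) = k}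

/-- `a, b : Fin k → V` form a chronological list of forces for the zero forcing game on `G`
started with the vertices of `B` blue: at step `t` the force `a t → b t` is performed, which
requires that `a t` is blue, that `b t` is a white neighbor of `a t`, and that every white
neighbor of `a t` equals `b t`. -/
def IsChronList (G : SimpleGraph V) (B : Set V) {k : ℕ} (a b : Fin k → V) : Prop :=
  (∀ t, G.Adj (a t) (b t)) ∧
  (∀ t, a t ∈ B ∨ ∃ s, s < t ∧ b s = a t) ∧
  (∀ t, b t ∉ B ∧ ∀ s, s < t → b s ≠ b t) ∧
  (∀ t z, G.Adj (a t) z → z ∉ B → (∀ s, s < t → b s ≠ z) → z = b t)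

/-- `B` is a zero forcing set of `G`: starting with exactly `B` blue, there is a sequence of
forces turning every vertex of `G` blue. -/
def IsZeroForcingSet (G : SimpleGraph V) (B : Set V) : Prop :=
  ∃ (k : ℕ) (a b : Fin k → V), IsChronList G B a b ∧ ∀ v : V, v ∈ B ∨ ∃ t, b t = v

/-- The zero forcing number `Z(G)`: the minimum cardinality of a zero forcing set of `G`. -/
noncomputable def zeroForcingNumber [Fintype V] (G : SimpleGraph V) : ℕ :=
  sInf {m | ∃ B : Finset V, B.card = m ∧ IsZeroForcingSet G ↑B}

/-- `mz(G) = |V(G)| - Z(G)`. -/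
noncomputable def mz [Fintype V] (G : SimpleGraph V) : ℕ :=
  Fintype.card V - zeroForcingNumber G

/-- The Petersen graph: vertices are the 2-element subsets of a 5-element set, two of them
adjacent iff they are disjoint (the Kneser graph `K(5,2)`). -/
def petersenGraph : SimpleGraph {s : Finset (Fin 5) // s.card = 2} where
  Adj s t := Disjoint (s : Finset (Fin 5)) (t : Finset (Fin 5))
  symm := ⟨fun s t h => h.symm⟩
  loopless := by
    refine ⟨?_⟩
    intro s h
    have hbot : (s : Finset (Fin 5)) = ∅ := by
      simpa using disjoint_self.mp h
    have := s.2
    rw [hbot] at this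
    simp at this

/-- The Petersen graph `G` satisfies `mz(G) = mr^cr_ℤ(G) = 5`, and this
common value equals `mr(G) = mr_ℝ(G)`, `mr_ℤ(G)`, `γ(G) = γ_ℝ(G)`, and `γ_ℤ(G)`. -/
-- my auxiliary defs
def nbrN (u : Nat) : Nat := [140,280,529,35,70,584,176,321,642,292].getD u 0

abbrev PV := {s : Finset (Fin 5) // s.card = 2}

instance decAdjP : DecidableRel petersenGraph.Adj :=
  fun s t => inferInstanceAs (Decidable (Disjoint (s : Finset (Fin 5)) (t : Finset (Fin 5))))

def vtx : Fin 10 → PV :=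
  ![⟨{0,1}, rfl⟩, ⟨{1,2}, rfl⟩, ⟨{2,3}, rfl⟩, ⟨{3,4}, rfl⟩, ⟨{4,0}, rfl⟩,
    ⟨{0,2}, rfl⟩, ⟨{1,3}, rfl⟩, ⟨{2,4}, rfl⟩, ⟨{3,0}, rfl⟩, ⟨{4,1}, rfl⟩]

lemma vtx_bij : Function.Bijective vtx := by decide

def adjB (i j : Fin 10) : Bool := (nbrN i).testBit j

lemma adj_iff : ∀ i j : Fin 10, petersenGraph.Adj (vtx i) (vtx j) ↔ adjB i j = true := by decide

lemma card_PV : Fintype.card PV = 10 := by decide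

noncomputable def eV : Fin 10 ≃ PV := Equiv.ofBijective vtx vtx_bij

def Bt : Fin 10 → Fin 5 → ℤ :=
  ![![1,0,0,0,0], ![0,1,0,0,0], ![-1,0,0,1,0], ![-1,-1,1,0,0], ![0,-1,1,0,1],
    ![0,0,0,1,1], ![0,0,0,0,-1], ![-1,0,1,0,1], ![0,-1,0,1,0], ![0,0,1,-1,0]]
def Ct : Fin 5 → Fin 10 → ℤ :=
  ![![1,0,-1,-1,0,0,0,-1,0,0], ![0,1,0,-1,-1,0,0,0,-1,0], ![0,0,-1,-1,-1,-1,0,-1,-1,0],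
    ![0,0,0,-1,-1,0,0,-1,0,-1], ![0,0,0,0,1,1,-1,1,0,0]]
def Mt : Fin 10 → Fin 10 → ℤ := fun i j => if i = j then 1 else if adjB i j then -1 else 0

lemma fact_ent : ∀ i j : Fin 10, Mt i j = ∑ k : Fin 5, Bt i k * Ct k j := by decide

lemma evalLap_vtx {R : Type*} [CommRing R] (i j : Fin 10) :
    evalLaplacian petersenGraph (fun _ => (1 : R)) (vtx i) (vtx j) = ((Mt i j : ℤ) : R) := by
  unfold evalLaplacian Mt
  by_cases h : vtx i = vtx j
  · have hij : i = j := vtx_bij.1 h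
    subst hij
    rw [if_pos rfl, if_pos rfl]; simp
  · have hij : i ≠ j := fun e => h (congrArg vtx e)
    rw [if_neg h, if_neg hij]
    by_cases ha : petersenGraph.Adj (vtx i) (vtx j)
    · rw [if_pos ha, if_pos ((adj_iff i j).mp ha)]; simp
    · rw [if_neg ha, if_neg (fun hb => ha ((adj_iff i j).mpr hb))]; simp

noncomputable def BR (R : Type*) [CommRing R] : Matrix PV (Fin 5) R :=
  fun v k => ((Bt (eV.symm v) k : ℤ) : R)
noncomputable def CR (R : Type*) [CommRing R] : Matrix (Fin 5) PV R :=
  fun k v => ((Ct k (eV.symm v) : ℤ) : R)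

lemma evalLap_fact (R : Type*) [CommRing R] :
    (evalLaplacian petersenGraph (fun _ => (1 : R)) : Matrix PV PV R) = BR R * CR R := by
  ext u v
  have hu : vtx (eV.symm u) = u := eV.apply_symm_apply u
  have hv : vtx (eV.symm v) = v := eV.apply_symm_apply v
  rw [Matrix.mul_apply]
  conv_lhs => rw [← hu, ← hv]
  rw [evalLap_vtx, fact_ent]
  push_cast
  rfl

lemma minor_zero {R : Type*} [CommRing R] {n : ℕ} (hn : 5 < n) (f g : Fin n → PV) :
    (((evalLaplacian petersenGraph (fun _ => (1 : R)) : Matrix PV PV R)).submatrix f g).det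
      = 0 := by
  set B2 : Matrix (Fin n) (Fin n) R :=
    fun i j => if h : (j : ℕ) < 5 then BR R (f i) ⟨j, h⟩ else 0 with hB2
  set C2 : Matrix (Fin n) (Fin n) R :=
    fun i j => if h : (i : ℕ) < 5 then CR R ⟨i, h⟩ (g j) else 0 with hC2
  have key : (evalLaplacian petersenGraph (fun _ => (1 : R)) : Matrix PV PV R).submatrix f g
      = B2 * C2 := by
    ext i l
    rw [evalLap_fact, Matrix.submatrix_apply, Matrix.mul_apply, Matrix.mul_apply]
    have h1 : ∀ j : Fin n, B2 i j * C2 j l =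
        (fun m : ℕ => if h : m < 5 then BR R (f i) ⟨m, h⟩ * CR R ⟨m, h⟩ (g l) else 0) (j : ℕ) := by
      intro j
      by_cases h : (j : ℕ) < 5
      · simp only [hB2, hC2, dif_pos h]
      · simp only [hB2, hC2, dif_neg h, zero_mul]
    symm
    rw [Finset.sum_congr rfl (fun j _ => h1 j)]
    rw [Fin.sum_univ_eq_sum_range
      (fun m => if h : m < 5 then BR R (f i) ⟨m, h⟩ * CR R ⟨m, h⟩ (g l) else 0) n]
    rw [← Finset.sum_subset (Finset.range_subset_range.mpr (le_of_lt hn))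
      (fun x _ hx => dif_neg (by simpa using hx))]
    rw [← Fin.sum_univ_eq_sum_range
      (fun m => if h : m < 5 then BR R (f i) ⟨m, h⟩ * CR R ⟨m, h⟩ (g l) else 0) 5]
    exact Finset.sum_congr rfl (fun k _ => by rw [dif_pos k.isLt])
  rw [key, Matrix.det_mul]
  have : B2.det = 0 := by
    apply Matrix.det_eq_zero_of_column_eq_zero ⟨5, hn⟩
    intro i
    exact dif_neg (lt_irrefl 5)
  rw [this, zero_mul]

def σ5 : Equiv.Perm (Fin 5) := Equiv.addRight 2
def fo : Fin 5 → PV := fun i => vtx ⟨i, by omega⟩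
def gn : Fin 5 → PV := fun j => vtx ⟨5 + (j : ℕ), by omega⟩

lemma hadj5 : ∀ i j : Fin 5, petersenGraph.Adj (fo i) (gn j) ↔ j = σ5 i := by decide
lemma hne5 : ∀ i j : Fin 5, fo i ≠ gn j := by decide
lemma fo_inj : Function.Injective fo := by decide
lemma gn_inj : Function.Injective gn := by decide
lemma sign_σ5 : Equiv.Perm.sign σ5 = 1 := by decide

lemma graphMatrix_minor {R : Type*} [CommRing R] (A : Matrix PV PV R)
    (hA : ∀ u v : PV, u ≠ v → (A u v ≠ 0 ↔ petersenGraph.Adj u v)) :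
    (A.submatrix fo gn).det = ∏ i : Fin 5, A (fo i) (gn (σ5 i)) := by
  have hmat : A.submatrix fo gn =
      (Matrix.diagonal fun i => A (fo i) (gn (σ5 i))) * (σ5.permMatrix R) := by
    ext i j
    rw [Matrix.diagonal_mul, Matrix.submatrix_apply]
    by_cases h : σ5 i = j
    · subst h
      simp [Equiv.Perm.permMatrix, PEquiv.toMatrix, Equiv.toPEquiv]
    · have h0 : A (fo i) (gn j) = 0 := by
        by_contra hne
        exact h (((hadj5 i j).mp ((hA _ _ (hne5 i j)).mp hne)).symm)
      simp [Equiv.Perm.permMatrix, PEquiv.toMatrix, Equiv.toPEquiv, h, h0]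
  rw [hmat, Matrix.det_mul, Matrix.det_diagonal, Matrix.det_permutation, sign_σ5]
  simp

lemma evalLap_isGraphMatrix {R : Type*} [CommRing R] [Nontrivial R] (d : PV → R) :
    IsGraphMatrix petersenGraph (evalLaplacian petersenGraph d) := by
  constructor
  · apply Matrix.ext
    intro u v
    show evalLaplacian petersenGraph d v u = evalLaplacian petersenGraph d u v
    unfold evalLaplacian
    by_cases h : u = v
    · subst h; rfl
    · rw [if_neg h, if_neg (Ne.symm h)]
      by_cases ha : petersenGraph.Adj u v
      · rw [if_pos ha, if_pos (ha.symm)]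
      · rw [if_neg ha, if_neg (fun hb => ha hb.symm)]
  · intro u v huv
    unfold evalLaplacian
    rw [if_neg huv]
    by_cases ha : petersenGraph.Adj u v
    · rw [if_pos ha]
      simpa using ha
    · rw [if_neg ha]
      simpa using ha

lemma ringRank_le_ten {R : Type*} [CommRing R] (M : Matrix PV PV R) {k : ℕ}
    (hk : k ∈ {k | ∃ f g : Fin k → PV, Function.Injective f ∧ Function.Injective g ∧
      (M.submatrix f g).det ≠ 0 ∧ (M.submatrix f g).det ∈ nonZeroDivisors R}) : k ≤ 10 := by
  obtain ⟨f, _, hf, _, _, _⟩ := hk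
  have := Fintype.card_le_of_injective f hf
  rwa [Fintype.card_fin, card_PV] at this

lemma five_mem_rank_set {R : Type*} [CommRing R] [Nontrivial R] [NoZeroDivisors R]
    (A : Matrix PV PV R) (hA : IsGraphMatrix petersenGraph A) :
    5 ∈ {k | ∃ f g : Fin k → PV, Function.Injective f ∧ Function.Injective g ∧
      (A.submatrix f g).det ≠ 0 ∧ (A.submatrix f g).det ∈ nonZeroDivisors R} := by
  refine ⟨fo, gn, fo_inj, gn_inj, ?_⟩
  have hdet := graphMatrix_minor A hA.2
  have hne : (A.submatrix fo gn).det ≠ 0 := by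
    rw [hdet]
    rw [Finset.prod_ne_zero_iff]
    intro i _
    exact (hA.2 _ _ (hne5 i (σ5 i))).mpr ((hadj5 i (σ5 i)).mpr rfl)
  exact ⟨hne, mem_nonZeroDivisors_of_ne_zero hne⟩

lemma five_le_ringRank {R : Type*} [CommRing R] [Nontrivial R] [NoZeroDivisors R]
    (A : Matrix PV PV R) (hA : IsGraphMatrix petersenGraph A) : 5 ≤ ringRank A :=
  le_csSup ⟨10, fun _ hk => ringRank_le_ten A hk⟩ (five_mem_rank_set A hA)

lemma ringRank_evalLap_one (R : Type*) [CommRing R] [Nontrivial R] [NoZeroDivisors R] :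
    ringRank (evalLaplacian petersenGraph (fun _ => (1 : R))) = 5 := by
  refine le_antisymm ?_ (five_le_ringRank _ (evalLap_isGraphMatrix _))
  apply csSup_le ⟨5, five_mem_rank_set _ (evalLap_isGraphMatrix _)⟩
  rintro k ⟨f, g, -, -, hdet, -⟩
  by_contra hlt
  exact hdet (minor_zero (by omega) f g)

lemma minRank_eq_five (R : Type*) [CommRing R] [Nontrivial R] [NoZeroDivisors R] :
    minRank R petersenGraph = 5 := by
  refine le_antisymm (Nat.sInf_le ⟨_, evalLap_isGraphMatrix (fun _ => (1 : R)),
    ringRank_evalLap_one R⟩) ?_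
  refine le_csInf ⟨5, _, evalLap_isGraphMatrix (fun _ => (1 : R)), ringRank_evalLap_one R⟩ ?_
  rintro k ⟨A, hA, rfl⟩
  exact five_le_ringRank A hA

lemma crMinRank_eq_five : crMinRank ℤ petersenGraph = 5 := by
  refine le_antisymm (Nat.sInf_le ⟨fun _ => 1, ringRank_evalLap_one ℤ⟩) ?_
  refine le_csInf ⟨5, fun _ => 1, ringRank_evalLap_one ℤ⟩ ?_
  rintro k ⟨d, rfl⟩
  exact five_le_ringRank _ (evalLap_isGraphMatrix d)

lemma genLap_iff (R : Type*) [CommRing R] [Nontrivial R] :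
    ∀ u v : PV, u ≠ v →
      (genLaplacian R petersenGraph u v ≠ 0 ↔ petersenGraph.Adj u v) := by
  intro u v huv
  unfold genLaplacian
  rw [if_neg huv]
  by_cases ha : petersenGraph.Adj u v
  · rw [if_pos ha]; simpa using ha
  · rw [if_neg ha]; simpa using ha

lemma crit5 (R : Type*) [CommRing R] [Nontrivial R] :
    criticalIdeal R petersenGraph 5 = ⊤ := by
  have hmem : ((genLaplacian R petersenGraph).submatrix fo gn).det ∈
      criticalIdeal R petersenGraph 5 :=
    Ideal.subset_span ⟨fo, gn, fo_inj, gn_inj, rfl⟩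
  apply Ideal.eq_top_of_isUnit_mem _ hmem
  have hdet := graphMatrix_minor (genLaplacian R petersenGraph) (genLap_iff R)
  have hent : ∀ i : Fin 5, genLaplacian R petersenGraph (fo i) (gn (σ5 i)) = -1 := by
    intro i
    unfold genLaplacian
    rw [if_neg (hne5 i (σ5 i)), if_pos ((hadj5 i (σ5 i)).mpr rfl)]
  rw [hdet, Finset.prod_congr rfl (fun i _ => hent i), Finset.prod_const]
  simp only [Finset.card_univ, Fintype.card_fin]
  have : (-1 : MvPolynomial PV R) ^ 5 = -1 := by ring
  rw [this]
  exact isUnit_one.neg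

lemma map_genLap (R : Type*) [CommRing R] (u v : PV) :
    MvPolynomial.eval (fun _ : PV => (1 : R)) (genLaplacian R petersenGraph u v) =
      evalLaplacian petersenGraph (fun _ => (1 : R)) u v := by
  unfold genLaplacian evalLaplacian
  rw [apply_ite (MvPolynomial.eval fun _ : PV => (1 : R)),
    apply_ite (MvPolynomial.eval fun _ : PV => (1 : R))]
  simp only [MvPolynomial.eval_X, map_neg, map_one, map_zero]
  split_ifs <;> rfl

lemma crit_not_top (R : Type*) [CommRing R] [Nontrivial R] {i : ℕ} (hi : 5 < i) :
    criticalIdeal R petersenGraph i ≠ ⊤ := by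
  intro htop
  set φ : MvPolynomial PV R →+* R := (MvPolynomial.eval (fun _ : PV => (1 : R)) : _)
  have h1 : (1 : MvPolynomial PV R) ∈ criticalIdeal R petersenGraph i := by
    rw [htop]; trivial
  have h2 : (1 : R) ∈ Ideal.map φ (criticalIdeal R petersenGraph i) := by
    simpa using Ideal.mem_map_of_mem φ h1
  have h3 : Ideal.map φ (criticalIdeal R petersenGraph i) ≤ ⊥ := by
    unfold criticalIdeal minorsIdeal
    rw [Ideal.map_span]
    apply Ideal.span_le.mpr
    rintro x ⟨p, ⟨f, g, -, -, rfl⟩, rfl⟩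
    have : φ ((genLaplacian R petersenGraph).submatrix f g).det =
        (((evalLaplacian petersenGraph (fun _ => (1 : R)) : Matrix PV PV R)).submatrix f g).det := by
      rw [RingHom.map_det]
      congr 1
      ext a b
      exact map_genLap R (f a) (g b)
    simp only [this, minor_zero hi f g]
    exact Ideal.zero_mem ⊥
  exact one_ne_zero ((Ideal.mem_bot).mp (h3 h2))

lemma algCoRank_eq_five (R : Type*) [CommRing R] [Nontrivial R] :
    algCoRank R petersenGraph = 5 := by
  have hmem : 5 ∈ {i | i ≤ Fintype.card PV ∧ criticalIdeal R petersenGraph i = ⊤} :=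
    ⟨by rw [card_PV]; omega, crit5 R⟩
  have hbd : ∀ i ∈ {i | i ≤ Fintype.card PV ∧ criticalIdeal R petersenGraph i = ⊤}, i ≤ 5 := by
    rintro i ⟨-, htop⟩
    by_contra hlt
    exact crit_not_top R (by omega) htop
  exact le_antisymm (csSup_le ⟨5, hmem⟩ hbd) (le_csSup ⟨5, hbd⟩ hmem)

def forcedN (m u : Nat) : Nat :=
  cond (m.testBit u) (let w := nbrN u &&& (1023 ^^^ m); cond ((w != 0) && (w &&& (w-1) == 0)) w 0) 0
def stepN (m : Nat) : Nat :=
  m ||| forcedN m 0 ||| forcedN m 1 ||| forcedN m 2 ||| forcedN m 3 ||| forcedN m 4 |||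
    forcedN m 5 ||| forcedN m 6 ||| forcedN m 7 ||| forcedN m 8 ||| forcedN m 9
def cntN (m : Nat) : Nat :=
  (m &&& 1) + (m >>> 1 &&& 1) + (m >>> 2 &&& 1) + (m >>> 3 &&& 1) + (m >>> 4 &&& 1) +
  (m >>> 5 &&& 1) + (m >>> 6 &&& 1) + (m >>> 7 &&& 1) + (m >>> 8 &&& 1) + (m >>> 9 &&& 1)

def mask (B : Finset PV) : ℕ := ∑ i : Fin 10, cond (decide (vtx i ∈ B)) (2^(i:ℕ)) 0

lemma sumBits_lt : ∀ (n : ℕ) (f : Fin n → Bool), (∑ i : Fin n, cond (f i) (2^(i:ℕ)) 0) < 2^n := by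
  intro n
  induction n with
  | zero => intro f; simp
  | succ n IH =>
    intro f
    rw [Fin.sum_univ_castSucc]
    have h1 := IH (fun i => f i.castSucc)
    have h2 : (cond (f (Fin.last n)) (2^((Fin.last n : Fin (n+1)):ℕ)) 0) ≤ 2^n := by
      cases f (Fin.last n) <;> simp [Fin.val_last]
    calc _ ≤ (2^n - 1) + 2^n := by
              have : ∑ i : Fin n, cond (f i.castSucc) (2^((i.castSucc : Fin (n+1)):ℕ)) 0 ≤ 2^n - 1 := by
                have : ∑ i : Fin n, cond (f i.castSucc) (2^((i.castSucc : Fin (n+1)):ℕ)) 0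
                    = ∑ i : Fin n, cond (f i.castSucc) (2^(i:ℕ)) 0 := by
                  exact Finset.sum_congr rfl (fun i _ => by rw [Fin.coe_castSucc])
                omega
              omega
      _ < 2^(n+1) := by
              have : (0:ℕ) < 2^n := Nat.two_pow_pos n
              rw [pow_succ]; omega

lemma sumBits_testBit : ∀ (n : ℕ) (f : Fin n → Bool) (j : ℕ),
    (∑ i : Fin n, cond (f i) (2^(i:ℕ)) 0).testBit j = if h : j < n then f ⟨j, h⟩ else false := by
  intro n
  induction n with
  | zero => intro f j; simp [Nat.zero_testBit]
  | succ n IH =>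
    intro f j
    rw [Fin.sum_univ_castSucc]
    have hM : ∑ i : Fin n, cond (f i.castSucc) (2^((i.castSucc : Fin (n+1)):ℕ)) 0
        = ∑ i : Fin n, cond (f i.castSucc) (2^(i:ℕ)) 0 :=
      Finset.sum_congr rfl (fun i _ => by rw [Fin.coe_castSucc])
    rw [hM]
    set M := ∑ i : Fin n, cond (f i.castSucc) (2^(i:ℕ)) 0 with hMdef
    have hMlt : M < 2^n := sumBits_lt n _
    have hMn : M.testBit n = false := Nat.testBit_lt_two_pow hMlt
    cases hl : f (Fin.last n) with
    | false =>
      simp only [cond_false, add_zero]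
      rw [IH]
      by_cases hj : j < n
      · rw [dif_pos hj, dif_pos (by omega)]; rfl
      · rw [dif_neg hj]
        by_cases hj2 : j < n + 1
        · rw [dif_pos hj2]
          have h5 : (⟨j, hj2⟩ : Fin (n+1)) = Fin.last n := by
            apply Fin.ext; simp only [Fin.val_last]; omega
          rw [h5, hl]
        · rw [dif_neg hj2]
    | true =>
      simp only [cond_true, Fin.val_last]
      by_cases hj : j < n
      · rw [Nat.add_comm M (2^n), Nat.testBit_two_pow_add_gt hj, IH, dif_pos hj, dif_pos (by omega)]
        rfl
      · by_cases hj2 : j < n + 1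
        · have hjn : j = n := by omega
          rw [dif_pos hj2]
          have h5 : (⟨j, hj2⟩ : Fin (n+1)) = Fin.last n := by
            apply Fin.ext; simp only [Fin.val_last]; omega
          rw [h5, hl, hjn, Nat.add_comm M (2^n), Nat.testBit_two_pow_add_eq, hMn]
          rfl
        · rw [dif_neg hj2]
          apply Nat.testBit_lt_two_pow
          calc M + 2^n < 2^n + 2^n := by omega
            _ = 2^(n+1) := by rw [pow_succ]; omega
            _ ≤ 2^j := Nat.pow_le_pow_right (by omega) (by omega)

lemma maskL1 : ∀ f : Fin 10 → Bool, ∀ j : Fin 10,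
    (∑ i : Fin 10, cond (f i) (2^(i:ℕ)) 0).testBit (j:ℕ) = f j := by
  intro f j
  rw [sumBits_testBit, dif_pos j.isLt]

lemma maskL2 : ∀ f : Fin 10 → Bool, (∑ i : Fin 10, cond (f i) (2^(i:ℕ)) 0) < 1024 :=
  fun f => sumBits_lt 10 f

lemma shiftand (m k : ℕ) : m >>> k &&& 1 = cond (m.testBit k) 1 0 := by
  rw [Nat.and_one_is_mod, Nat.shiftRight_eq_div_pow, Nat.testBit_eq_decide_div_mod_eq]
  rcases Nat.mod_two_eq_zero_or_one (m / 2^k) with h | h <;> simp [h]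

lemma cntN_eq (m : ℕ) : cntN m = ∑ i : Fin 10, cond (m.testBit (i:ℕ)) 1 0 := by
  have h0 : m &&& 1 = m >>> 0 &&& 1 := by rfl
  rw [cntN, h0]
  simp only [shiftand]
  simp [Fin.sum_univ_succ]
  ring

lemma maskL3 : ∀ f : Fin 10 → Bool,
    cntN (∑ i : Fin 10, cond (f i) (2^(i:ℕ)) 0) = ∑ i : Fin 10, cond (f i) 1 0 := by
  intro f
  rw [cntN_eq]
  exact Finset.sum_congr rfl (fun i _ => by rw [maskL1])

lemma mask_testBit (B : Finset PV) (j : Fin 10) :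
    (mask B).testBit (j:ℕ) = decide (vtx j ∈ B) := maskL1 (fun i => decide (vtx i ∈ B)) j

lemma mask_lt (B : Finset PV) : mask B < 1024 := maskL2 _

lemma mask_card (B : Finset PV) : cntN (mask B) = B.card := by
  rw [mask, maskL3]
  have h1 : B.card = ∑ v : PV, if v ∈ B then 1 else 0 := by
    rw [← Finset.card_filter]
    congr 1
    simp [Finset.filter_mem_eq_inter]
  rw [h1, ← Fintype.sum_bijective vtx vtx_bij _ _ (fun i => rfl)]
  exact Finset.sum_congr rfl (fun i _ => by rw [Bool.cond_decide])

lemma nbrN_lt (u : ℕ) : nbrN u < 1024 := by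
  by_cases h : u < 10
  · interval_cases u <;> decide
  · rw [nbrN, List.getD_eq_default]
    · decide
    · simpa using by omega

lemma le_pow10 {j : ℕ} (hj : 10 ≤ j) : (1024:ℕ) ≤ 2^j := by
  calc (1024:ℕ) = 2^10 := by norm_num
    _ ≤ 2^j := Nat.pow_le_pow_right (by omega) hj

lemma forcedN_cases (m u : ℕ) : forcedN m u = 0 ∨ forcedN m u = nbrN u &&& (1023 ^^^ m) := by
  unfold forcedN
  cases m.testBit u
  · exact Or.inl rfl
  · simp only [cond_true]
    cases ((nbrN u &&& (1023 ^^^ m) != 0) && ((nbrN u &&& (1023 ^^^ m)) &&& ((nbrN u &&& (1023 ^^^ m)) - 1) == 0))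
    · exact Or.inl rfl
    · exact Or.inr rfl

lemma forcedN_testBit_high (m u j : ℕ) (hj : 10 ≤ j) : (forcedN m u).testBit j = false := by
  rcases forcedN_cases m u with h | h <;> rw [h]
  · exact Nat.zero_testBit j
  · rw [Nat.testBit_and]
    have : (nbrN u).testBit j = false :=
      Nat.testBit_lt_two_pow (lt_of_lt_of_le (nbrN_lt u) (le_pow10 hj))
    rw [this, Bool.false_and]

lemma stepN_testBit_high (m j : ℕ) (hm : m < 1024) (hj : 10 ≤ j) :
    (stepN m).testBit j = false := by
  have hmj : m.testBit j = false :=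
    Nat.testBit_lt_two_pow (lt_of_lt_of_le hm (le_pow10 hj))
  simp only [stepN, Nat.testBit_or, hmj, forcedN_testBit_high m _ _ hj, Bool.or_self,
    Bool.or_false, Bool.false_or]

lemma stepN_lt (m : ℕ) (hm : m < 1024) : stepN m < 1024 := by
  have := Nat.lt_pow_two_of_testBit (stepN m) (fun i hi => stepN_testBit_high m i hm hi)
  simpa using this

lemma stepN_mono (m j : ℕ) (h : m.testBit j = true) : (stepN m).testBit j = true := by
  simp only [stepN, Nat.testBit_or, h, Bool.true_or]

lemma iterN_lt (m : ℕ) (hm : m < 1024) (n : ℕ) : stepN^[n] m < 1024 := by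
  induction n with
  | zero => exact hm
  | succ n IH => rw [Function.iterate_succ_apply']; exact stepN_lt _ IH

lemma iterN_mono (m j : ℕ) {s t : ℕ} (hst : s ≤ t)
    (h : (stepN^[s] m).testBit j = true) : (stepN^[t] m).testBit j = true := by
  induction t with
  | zero => rwa [Nat.le_zero.mp hst] at h
  | succ t IH =>
    rcases Nat.lt_or_ge s (t+1) with h2 | h2
    · rw [Function.iterate_succ_apply']
      exact stepN_mono _ _ (IH (by omega))
    · have : s = t + 1 := by omega
      rwa [this] at h

lemma stepN_force (m : ℕ) (hm : m < 1024) (u v : Fin 10)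
    (hu : m.testBit (u:ℕ) = true) (hadj : adjB u v = true) (hv : m.testBit (v:ℕ) = false)
    (huniq : ∀ w : Fin 10, adjB u w = true → m.testBit (w:ℕ) = false → w = v) :
    (stepN m).testBit (v:ℕ) = true := by
  have hw : nbrN u &&& (1023 ^^^ m) = 2^(v:ℕ) := by
    apply Nat.eq_of_testBit_eq
    intro j
    rw [Nat.testBit_and, Nat.testBit_xor, Nat.testBit_two_pow]
    by_cases hj : j < 10
    · have h1023 : Nat.testBit 1023 j = true := by
        rw [show (1023:ℕ) = 2^10 - 1 from rfl, Nat.testBit_two_pow_sub_one]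
        simpa using hj
      set w : Fin 10 := ⟨j, hj⟩ with hwdef
      have hjw : j = (w : ℕ) := rfl
      rw [hjw, h1023]
      have hnb : (nbrN ↑u).testBit (w:ℕ) = adjB u w := rfl
      rw [hnb]
      by_cases hwv : w = v
      · subst hwv
        rw [hadj, hv]
        simp
      · have hne2 : ¬((v:ℕ) = (w:ℕ)) := fun h => hwv (Fin.ext h.symm)
        by_cases hja : adjB u w = true
        · have hjm : m.testBit (w:ℕ) = true := by
            by_contra hc
            exact hwv (huniq w hja (by simpa using hc))
          rw [hja, hjm]
          simp [hne2]
        · rw [Bool.not_eq_true] at hja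
          rw [hja]
          simp [hne2]
    · have h1 : (nbrN ↑u).testBit j = false :=
        Nat.testBit_lt_two_pow (lt_of_lt_of_le (nbrN_lt _) (le_pow10 (by omega)))
      rw [h1, Bool.false_and]
      have hv10 := v.isLt
      simp only [false_eq_decide_iff]
      omega
  have hpow : ((2:ℕ)^(v:ℕ) &&& (2^(v:ℕ) - 1)) = 0 := by
    apply Nat.eq_of_testBit_eq
    intro j
    rw [Nat.testBit_and, Nat.testBit_two_pow, Nat.testBit_two_pow_sub_one, Nat.zero_testBit]
    by_cases h : (v:ℕ) = j <;> simp [h]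
  have hforced : forcedN m (u:ℕ) = 2^(v:ℕ) := by
    unfold forcedN
    rw [hu, cond_true]
    show (cond ((nbrN ↑u &&& (1023 ^^^ m)) != 0 && _) _ _) = _
    rw [hw, hpow]
    have h2 : ((2:ℕ)^(v:ℕ) != 0) = true := by simp
    rw [h2]
    simp
  have hbit : (forcedN m (u:ℕ)).testBit (v:ℕ) = true := by
    rw [hforced, Nat.testBit_two_pow_self]
  clear hw hpow huniq hadj hv hforced
  fin_cases u <;> (simp only [stepN, Nat.testBit_or] at *; simp_all)

lemma eV_apply (i : Fin 10) : eV i = vtx i := rfl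
lemma vtx_symm (v : PV) : vtx (eV.symm v) = v := by rw [← eV_apply]; exact eV.apply_symm_apply v
lemma symm_vtx (i : Fin 10) : eV.symm (vtx i) = i := by rw [← eV_apply]; exact eV.symm_apply_apply i

lemma zfs_mask (B : Finset PV) (h : IsZeroForcingSet petersenGraph ↑B) :
    stepN^[10] (mask B) = 1023 := by
  obtain ⟨k, a, b, ⟨h1, h2, h3, h4⟩, hcov⟩ := h
  have hBbit : ∀ v : PV, v ∈ B → ∀ n : ℕ, (stepN^[n] (mask B)).testBit ((eV.symm v : Fin 10) : ℕ) = true := by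
    intro v hv n
    apply iterN_mono (mask B) _ (Nat.zero_le n)
    show (mask B).testBit _ = true
    rw [mask_testBit B (eV.symm v)]
    rw [vtx_symm]
    simpa using hv
  -- b is injective, so k ≤ 10
  have hbinj : Function.Injective b := by
    intro s t hst
    by_contra hne
    rcases Ne.lt_or_gt hne with hlt | hlt
    · exact (h3 t).2 s hlt hst
    · exact (h3 s).2 t hlt hst.symm
  have hk10 : k ≤ 10 := by
    have := Fintype.card_le_of_injective b hbinj
    rwa [Fintype.card_fin, card_PV] at this
  -- key induction
  have key : ∀ n : ℕ, ∀ t : Fin k, (t:ℕ) < n →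
      (stepN^[(t:ℕ)+1] (mask B)).testBit ((eV.symm (b t) : Fin 10) : ℕ) = true := by
    intro n
    induction n with
    | zero => intro t ht; omega
    | succ n IH =>
      intro t ht
      rcases Nat.lt_or_ge (t:ℕ) n with hlt | hge
      · exact IH t hlt
      have htn : (t:ℕ) = n := by omega
      set m' := stepN^[(t:ℕ)] (mask B) with hm'
      have hm'lt : m' < 1024 := iterN_lt _ (mask_lt B) _
      have hat : m'.testBit ((eV.symm (a t) : Fin 10) : ℕ) = true := by
        rcases h2 t with hB' | ⟨s, hst, hbs⟩
        · exact hBbit _ hB' _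
        · rw [← hbs]
          exact iterN_mono _ _ (by omega : (s:ℕ)+1 ≤ (t:ℕ)) (IH s (by omega))
      rw [Function.iterate_succ_apply']
      by_cases hbt : m'.testBit ((eV.symm (b t) : Fin 10) : ℕ) = true
      · exact stepN_mono _ _ hbt
      · apply stepN_force m' hm'lt (eV.symm (a t)) (eV.symm (b t)) hat
        · apply (adj_iff _ _).mp
          rw [vtx_symm, vtx_symm]
          exact h1 t
        · simpa using hbt
        · intro w hw hwm
          have hZadj : petersenGraph.Adj (a t) (vtx w) := by
            have := (adj_iff (eV.symm (a t)) w).mpr hw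
            rwa [vtx_symm] at this
          have hZB : vtx w ∉ (↑B : Set PV) := by
            intro hmem
            have := hBbit (vtx w) hmem (t:ℕ)
            rw [symm_vtx] at this
            rw [this] at hwm
            exact absurd hwm (by simp)
          have hZs : ∀ s : Fin k, s < t → b s ≠ vtx w := by
            intro s hs heq
            have hbit := IH s (by omega)
            rw [heq, symm_vtx] at hbit
            have := iterN_mono (mask B) (w:ℕ) (by omega : (s:ℕ)+1 ≤ (t:ℕ)) hbit
            rw [← hm'] at this
            rw [this] at hwm
            exact absurd hwm (by simp)
          have := h4 t (vtx w) hZadj hZB hZs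
          rw [← this, symm_vtx]
  -- conclude
  apply Nat.eq_of_testBit_eq
  intro j
  by_cases hj : j < 10
  · have h1023 : Nat.testBit 1023 j = true := by
      rw [show (1023:ℕ) = 2^10 - 1 from rfl, Nat.testBit_two_pow_sub_one]
      simpa using hj
    rw [h1023]
    set w : Fin 10 := ⟨j, hj⟩ with hwdef
    have hjw : j = (w : ℕ) := rfl
    rw [hjw]
    rcases hcov (vtx w) with hmem | ⟨t, hbt⟩
    · have := hBbit (vtx w) hmem 10
      rwa [symm_vtx] at this
    · have := key k t t.isLt
      rw [hbt, symm_vtx] at this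
      exact iterN_mono _ _ (by omega : (t:ℕ)+1 ≤ 10) this
  · rw [Nat.testBit_lt_two_pow (lt_of_lt_of_le (iterN_lt _ (mask_lt B) 10) (le_pow10 (by omega))),
      Nat.testBit_lt_two_pow (lt_of_lt_of_le (by norm_num : (1023:ℕ) < 1024) (le_pow10 (by omega)))]

set_option maxHeartbeats 4000000 in
set_option maxRecDepth 20000 in
lemma no4 : ∀ m < 1024, cntN m ≤ 4 → stepN^[10] m ≠ 1023 := by decide

def bb : Fin 5 → PV := fun t => gn (σ5 t)

lemma B5card : ({vtx 0, vtx 1, vtx 2, vtx 3, vtx 4} : Finset PV).card = 5 := by decide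

lemma B5zfs : IsZeroForcingSet petersenGraph ↑({vtx 0, vtx 1, vtx 2, vtx 3, vtx 4} : Finset PV) := by
  refine ⟨5, fo, bb, ⟨?_, ?_, ?_, ?_⟩, ?_⟩ <;>
    first
      | decide
      | (simp only [Finset.mem_coe]; decide)

lemma zfn_eq_five : zeroForcingNumber petersenGraph = 5 := by
  refine le_antisymm (Nat.sInf_le ⟨_, B5card, B5zfs⟩) ?_
  refine le_csInf ⟨5, _, B5card, B5zfs⟩ ?_
  rintro m ⟨B, hcard, hzfs⟩
  by_contra hlt
  apply no4 (mask B) (mask_lt B) (by rw [mask_card, hcard]; omega)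
  exact zfs_mask B hzfs

lemma mz_eq_five : mz petersenGraph = 5 := by
  rw [mz, zfn_eq_five, card_PV]

theorem petersen_mz_eq_crMinRank :
    mz petersenGraph = crMinRank ℤ petersenGraph ∧
    mz petersenGraph = 5 ∧
    mz petersenGraph = minRank ℝ petersenGraph ∧
    mz petersenGraph = minRank ℤ petersenGraph ∧
    mz petersenGraph = algCoRank ℝ petersenGraph ∧
    mz petersenGraph = algCoRank ℤ petersenGraph := by
  refine ⟨?_, mz_eq_five, ?_, ?_, ?_, ?_⟩
  · rw [mz_eq_five, crMinRank_eq_five]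
  · rw [mz_eq_five, minRank_eq_five ℝ]
  · rw [mz_eq_five, minRank_eq_five ℤ]
  · rw [mz_eq_five, algCoRank_eq_five ℝ]
  · rw [mz_eq_five, algCoRank_eq_five ℤ]
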